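/- Let G be a graph whose edge set is a union of edge sets E₁, …, E_l of a chain of cliques α₁, …, α_l satisfying: E_i ∩ E_j = ∅ whenever j ≥ i + 2, and consecutive cliques overlap according to the staircase intersection conditions (α_i ∩ α_{i+2} = α_{i+1} restricted appropriately). Then G is a chordal graph, and the path α₁ — α₂ — ⋯ — α_l is its unique clique tree with the induced subtree property. -/

import Mathlib

open SimpleGraph

/-- A cycle `w` in `G` has a chord: an edge of `G` between two vertices of the cycle
which is not an edge of the cycle. -/
def HasChord {V : Type*} (G : SimpleGraph V) {v : V} (w : G.Walk v v) : Prop :=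
  ∃ a b, a ∈ w.support ∧ b ∈ w.support ∧ G.Adj a b ∧ ¬ w.toSubgraph.Adj a b

/-- A graph is chordal if every cycle of length greater than three has a chord. -/
def Chordal {V : Type*} (G : SimpleGraph V) : Prop :=
  ∀ ⦃v : V⦄ (w : G.Walk v v), w.IsCycle → 3 < w.length → HasChord G w

/-- A tree `T` on the index set of the cliques `α` has the induced subtree property:
for every vertex `v`, the cliques containing `v` form a connected subgraph of `T`. -/
def InducedSubtreeProperty {V : Type*} {l : ℕ} (T : SimpleGraph (Fin l))
    (α : Fin l → Finset V) : Prop :=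
  ∀ (v : V) (i j : Fin l) (hi : i ∈ {k | v ∈ α k}) (hj : j ∈ {k | v ∈ α k}),
    (T.induce {k | v ∈ α k}).Reachable ⟨i, hi⟩ ⟨j, hj⟩

lemma aux_mod_shift_ne {n a k : ℕ} (hn : 4 ≤ n) (hk1 : 1 ≤ k) (hk3 : k ≤ 3) :
    (a + k) % n ≠ a % n := by
  have h1 : (a + k) % n = (a % n + k) % n := by
    rw [Nat.add_mod, Nat.mod_eq_of_lt (show k < n by omega)]
  have hr : a % n < n := Nat.mod_lt _ (by omega)
  rcases lt_or_ge (a % n + k) n with h | h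
  · rw [h1, Nat.mod_eq_of_lt h]; omega
  · rw [h1, Nat.mod_eq_sub_mod h, Nat.mod_eq_of_lt (by omega)]; omega

lemma aux_mod_succ_congr {n a b : ℕ} (h : a % n = b % n) : (a + 1) % n = (b + 1) % n := by
  rw [Nat.add_mod a, Nat.add_mod b, h]

lemma aux_getVert_eq_support_getElem {V : Type*} {G : SimpleGraph V} {u v : V}
    (p : G.Walk u v) {i : ℕ} (h : i < p.support.length) : p.getVert i = p.support[i] := by
  induction p generalizing i with
  | nil =>
    simp only [SimpleGraph.Walk.support_nil, List.length_singleton] at h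
    interval_cases i
    simp [SimpleGraph.Walk.getVert]
  | cons ha p ih =>
    cases i with
    | zero => simp [SimpleGraph.Walk.getVert]
    | succ n =>
      simp only [SimpleGraph.Walk.support_cons, List.length_cons] at h
      simpa [SimpleGraph.Walk.getVert] using ih (by omega)

lemma aux_cycle_getVert_injOn {V : Type*} {G : SimpleGraph V} {v : V} {p : G.Walk v v}
    (hp : p.IsCycle) {i j : ℕ} (hi : i < p.length) (hj : j < p.length)
    (h : p.getVert i = p.getVert j) : i = j := by
  have hnd := hp.support_nodup
  have hsl : p.support.length = p.length + 1 := p.length_support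
  have htl : p.support.tail.length = p.length := by
    rw [List.length_tail, hsl]; omega
  have h3 : 3 ≤ p.length := hp.three_le_length
  have key0 : p.getVert 0 = p.support.tail[p.length - 1]'(by omega) := by
    rw [List.getElem_tail, ← aux_getVert_eq_support_getElem p (by omega)]
    rw [show p.length - 1 + 1 = p.length from by omega]
    simp
  have keyk : ∀ k (hk1 : 1 ≤ k) (hk : k < p.length),
      p.getVert k = p.support.tail[k - 1]'(by omega) := by
    intro k hk1 hk
    rw [List.getElem_tail, ← aux_getVert_eq_support_getElem p (by omega)]
    congr 1
    omega
  by_cases hi0 : i = 0 <;> by_cases hj0 : j = 0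
  · omega
  · subst hi0
    rw [key0, keyk j (by omega) hj] at h
    have := (List.Nodup.getElem_inj_iff hnd).mp h
    omega
  · subst hj0
    rw [key0, keyk i (by omega) hi] at h
    have := (List.Nodup.getElem_inj_iff hnd).mp h
    omega
  · rw [keyk i (by omega) hi, keyk j (by omega) hj] at h
    have := (List.Nodup.getElem_inj_iff hnd).mp h
    omega

lemma aux_adj_of_reachable_two {W : Type*} {H : SimpleGraph W} {S : Set W} {x y : S}
    (hxy : x ≠ y) (htwo : ∀ z : S, z = x ∨ z = y)
    (h : (H.induce S).Reachable x y) : H.Adj x y := by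
  obtain ⟨p⟩ := h
  cases p with
  | nil => exact absurd rfl hxy
  | @cons _ z _ ha p =>
    rcases htwo z with rfl | rfl
    · exact absurd rfl ha.ne'
    · exact ha

/-- A graph whose edges are covered by a chain of cliques (with nonconsecutive cliques
intersecting only inside the intermediate one, so every vertex lies in at most two
consecutive cliques, and consecutive cliques overlapping) is chordal, and the path
`α₁ — α₂ — ⋯ — α_l` is its unique clique tree with the induced subtree property. -/
theorem chain_of_cliques_chordal_unique_clique_tree {V : Type*} [Fintype V] [DecidableEq V]
    {l : ℕ} (hl : 1 ≤ l) (G : SimpleGraph V) (α : Fin l → Finset V)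
    (hadj : ∀ u v : V, G.Adj u v ↔ u ≠ v ∧ ∃ i, u ∈ α i ∧ v ∈ α i)
    (hcover : ∀ v : V, ∃ i, v ∈ α i)
    (hchain : ∀ (v : V) (i j : Fin l), v ∈ α i → v ∈ α j → i ≤ j → (j : ℕ) ≤ (i : ℕ) + 1)
    (hconsec : ∀ i j : Fin l, (i : ℕ) + 1 = (j : ℕ) → ((α i) ∩ (α j)).Nonempty) :
    Chordal G ∧
      InducedSubtreeProperty (pathGraph l) α ∧
      ∀ T : SimpleGraph (Fin l), T.IsTree → InducedSubtreeProperty T α →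
        T = pathGraph l := by
  refine ⟨?_, ?_, ?_⟩
  · -- Chordal
    intro v0 w hw hlen
    set n := w.length with hn
    have hn4 : 4 ≤ n := hlen
    let u : ℕ → V := fun j => w.getVert (j % n)
    have hmodlt : ∀ j : ℕ, j % n < n := fun j => Nat.mod_lt _ (by omega)
    have hgetu : ∀ s, s ≤ n → w.getVert s = u s := by
      intro s hs
      rcases eq_or_lt_of_le hs with heq | hlt
      · show w.getVert s = w.getVert (s % n)
        rw [heq, Nat.mod_self, hn]
        simp
      · show w.getVert s = w.getVert (s % n)
        rw [Nat.mod_eq_of_lt hlt]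
    have huinj : ∀ a b : ℕ, u a = u b → a % n = b % n := by
      intro a b hab
      exact aux_cycle_getVert_injOn hw (hmodlt a) (hmodlt b) hab
    have humod : ∀ a b : ℕ, a % n = b % n → u a = u b := by
      intro a b hab
      show w.getVert _ = w.getVert _
      rw [hab]
    have hadjU : ∀ j : ℕ, G.Adj (u j) (u (j + 1)) := by
      intro j
      have h1 : u (j + 1) = w.getVert (j % n + 1) := by
        rw [humod (j + 1) (j % n + 1)
          (aux_mod_succ_congr (Nat.mod_eq_of_lt (hmodlt j))).symm]
        exact (hgetu (j % n + 1) (by have := hmodlt j; omega)).symm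
      rw [h1]
      exact w.adj_getVert_succ (hmodlt j)
    have hne2 : ∀ t : ℕ, u t ≠ u (t + 2) := by
      intro t heq
      exact aux_mod_shift_ne hn4 (by norm_num) (by norm_num) (huinj t (t + 2) heq).symm
    have hsupp : ∀ t : ℕ, u t ∈ w.support := by
      intro t
      rw [SimpleGraph.Walk.mem_support_iff_exists_getVert]
      exact ⟨t % n, rfl, by have := hmodlt t; omega⟩
    have key : ∀ (t : ℕ) (i : Fin l), u t ∈ α i → u (t + 2) ∈ α i → HasChord G w := by
      intro t i hx hz
      refine ⟨u t, u (t + 2), hsupp t, hsupp (t + 2),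
        (hadj _ _).mpr ⟨hne2 t, i, hx, hz⟩, ?_⟩
      rw [SimpleGraph.Walk.toSubgraph_adj_iff]
      rintro ⟨s, hs, hslen⟩
      rw [Sym2.eq_iff] at hs
      have hgs : w.getVert s = u s := hgetu s (by omega)
      have hgs1 : w.getVert (s + 1) = u (s + 1) := hgetu (s + 1) (by omega)
      rcases hs with ⟨h1, h2⟩ | ⟨h1, h2⟩
      · rw [hgs] at h1
        rw [hgs1] at h2
        have e2 : (s + 1) % n = (t + 2) % n := huinj _ _ h2
        have e3 : (s + 1) % n = (t + 1) % n := aux_mod_succ_congr (huinj _ _ h1)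
        have hne := aux_mod_shift_ne (a := t + 1) (k := 1) hn4 le_rfl (by norm_num)
        rw [show t + 1 + 1 = t + 2 from by omega] at hne
        exact hne (e2.symm.trans e3)
      · rw [hgs] at h1
        rw [hgs1] at h2
        have e1 : s % n = (t + 2) % n := huinj _ _ h1
        have e2 : (s + 1) % n = t % n := huinj _ _ h2
        have e3 : (s + 1) % n = (t + 3) % n := by
          have := aux_mod_succ_congr e1
          rwa [show t + 2 + 1 = t + 3 from by omega] at this
        exact aux_mod_shift_ne (a := t) (k := 3) hn4 (by norm_num) le_rfl
          (e3.symm.trans e2)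
    have hexist : ∀ k : ℕ, ∃ i : Fin l, u k ∈ α i ∧ u (k + 1) ∈ α i :=
      fun k => ((hadj _ _).mp (hadjU k)).2
    let g : ℕ → Fin l := fun k => (hexist k).choose
    have hg : ∀ k, u k ∈ α (g k) ∧ u (k + 1) ∈ α (g k) := fun k => (hexist k).choose_spec
    let F : ℕ → Fin l := fun j => g (j % n)
    have hF1 : ∀ j, u j ∈ α (F j) := by
      intro j
      have h := (hg (j % n)).1
      rwa [humod (j % n) j (Nat.mod_eq_of_lt (hmodlt j))] at h
    have hF2 : ∀ j, u (j + 1) ∈ α (F j) := by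
      intro j
      have h := (hg (j % n)).2
      rwa [humod (j % n + 1) (j + 1)
        (aux_mod_succ_congr (Nat.mod_eq_of_lt (hmodlt j)))] at h
    obtain ⟨j0, hj0mem, hj0min⟩ :=
      Finset.exists_min_image (Finset.range n) F ⟨0, by simp; omega⟩
    have hj0 : j0 < n := Finset.mem_range.mp hj0mem
    have hFmin : ∀ j : ℕ, F j0 ≤ F j := by
      intro j
      have hFe : F j = F (j % n) := by
        show g (j % n) = g (j % n % n)
        rw [Nat.mod_eq_of_lt (hmodlt j)]
      rw [hFe]
      exact hj0min _ (Finset.mem_range.mpr (hmodlt j))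
    set i0 := F j0 with hi0
    set j1 := j0 + n - 1 with hj1def
    have hj1e : j1 + 1 = j0 + n := by omega
    have hj1e2 : j1 + 2 = j0 + n + 1 := by omega
    have hu1 : u (j0 + n) = u j0 := humod _ _ (by rw [Nat.add_mod_right])
    have hu2 : u (j0 + n + 1) = u (j0 + 1) := humod _ _ (by
      rw [show j0 + n + 1 = j0 + 1 + n from by omega, Nat.add_mod_right])
    have hA : u j0 ∈ α i0 := hF1 j0
    have hB : u (j0 + 1) ∈ α i0 := hF2 j0
    have hC : u j1 ∈ α (F j1) := hF1 j1
    have hD : u j0 ∈ α (F j1) := by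
      have h := hF2 j1
      rwa [hj1e, hu1] at h
    have hE : u (j0 + 1) ∈ α (F (j0 + 1)) := hF1 (j0 + 1)
    have hFm : u (j0 + 2) ∈ α (F (j0 + 1)) := by
      have h := hF2 (j0 + 1)
      rwa [show j0 + 1 + 1 = j0 + 2 from by omega] at h
    have hb1 : (F j1 : ℕ) ≤ (i0 : ℕ) + 1 := hchain (u j0) i0 (F j1) hA hD (hFmin j1)
    have hb2 : (F (j0 + 1) : ℕ) ≤ (i0 : ℕ) + 1 :=
      hchain (u (j0 + 1)) i0 (F (j0 + 1)) hB hE (hFmin (j0 + 1))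
    by_cases hc1 : F j1 = i0
    · refine key j1 i0 (hc1 ▸ hC) ?_
      rw [hj1e2, hu2]
      exact hB
    by_cases hc2 : F (j0 + 1) = i0
    · exact key j0 i0 hA (hc2 ▸ hFm)
    · have hl1 : (i0 : ℕ) ≤ (F j1 : ℕ) := hFmin j1
      have hl2 : (i0 : ℕ) ≤ (F (j0 + 1) : ℕ) := hFmin (j0 + 1)
      have hne1 : (F j1 : ℕ) ≠ (i0 : ℕ) := fun h => hc1 (Fin.ext h)
      have hne2' : (F (j0 + 1) : ℕ) ≠ (i0 : ℕ) := fun h => hc2 (Fin.ext h)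
      have hFF : F j1 = F (j0 + 1) := Fin.ext (by omega)
      refine key j1 (F j1) hC ?_
      rw [hj1e2, hu2, hFF]
      exact hE
  · -- InducedSubtreeProperty (pathGraph l) α
    have main : ∀ (v : V) (i j : Fin l) (hi : i ∈ {k | v ∈ α k}) (hj : j ∈ {k | v ∈ α k}),
        i ≤ j → ((pathGraph l).induce {k | v ∈ α k}).Reachable ⟨i, hi⟩ ⟨j, hj⟩ := by
      intro v i j hi hj hij
      have hj1 : (j : ℕ) ≤ (i : ℕ) + 1 := hchain v i j hi hj hij
      have hij' : (i : ℕ) ≤ (j : ℕ) := hij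
      rcases eq_or_lt_of_le hij with heq | hlt
      · subst heq
        exact Reachable.refl _
      · have hstep : (i : ℕ) + 1 = (j : ℕ) := by
          have := Fin.lt_def.mp hlt
          omega
        have : ((pathGraph l).induce {k | v ∈ α k}).Adj ⟨i, hi⟩ ⟨j, hj⟩ := by
          show (pathGraph l).Adj i j
          exact pathGraph_adj.mpr (Or.inl hstep)
        exact this.reachable
    intro v i j hi hj
    rcases le_total i j with h | h
    · exact main v i j hi hj h
    · exact (main v j i hj hi h).symm
  · -- uniqueness
    intro T hT hTisp
    classical
    obtain ⟨m, rfl⟩ : ∃ m, l = m + 1 := ⟨l - 1, by omega⟩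
    have hstep : ∀ a b : Fin (m + 1), (a : ℕ) + 1 = (b : ℕ) → T.Adj a b := by
      intro a b hab
      obtain ⟨v, hv⟩ := hconsec a b hab
      rw [Finset.mem_inter] at hv
      have hva : v ∈ α a := hv.1
      have hvb : v ∈ α b := hv.2
      have hxy : (⟨a, hva⟩ : {k | v ∈ α k}) ≠ ⟨b, hvb⟩ := by
        intro h
        have h2 : a = b := Subtype.ext_iff.mp h
        have := congrArg Fin.val h2
        omega
      have htwo : ∀ z : {k | v ∈ α k},
          z = (⟨a, hva⟩ : {k | v ∈ α k}) ∨ z = ⟨b, hvb⟩ := by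
        rintro ⟨k, hk⟩
        have hk' : v ∈ α k := hk
        rcases le_or_gt k a with h | h
        · left
          have h1 : (b : ℕ) ≤ (k : ℕ) + 1 := hchain v k b hk' hvb
            (by rw [Fin.le_def] at h ⊢; omega)
          have h2 : (k : ℕ) ≤ (a : ℕ) := h
          have hke : k = a := Fin.ext (by omega)
          subst hke
          rfl
        · right
          have h1 : (k : ℕ) ≤ (a : ℕ) + 1 := hchain v a k hva hk' h.le
          have h2 : (a : ℕ) < (k : ℕ) := Fin.lt_def.mp h
          have hke : k = b := Fin.ext (by omega)
          subst hke
          rfl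
      exact aux_adj_of_reachable_two hxy htwo (hTisp v a b hva hvb)
    have hle : pathGraph (m + 1) ≤ T := by
      intro a b hab
      rw [pathGraph_adj] at hab
      rcases hab with h | h
      · exact hstep a b h
      · exact (hstep b a h).symm
    have hTcard : T.edgeFinset.card + 1 = m + 1 := by
      have := hT.card_edgeFinset
      simpa using this
    have hPcard : m ≤ (pathGraph (m + 1)).edgeFinset.card := by
      have := Finset.card_le_card_of_injOn
        (f := fun k : Fin m => s(Fin.castSucc k, Fin.succ k))
        (s := (Finset.univ : Finset (Fin m)))
        (t := (pathGraph (m + 1)).edgeFinset)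
        (fun k _ => by
          rw [Finset.mem_coe, SimpleGraph.mem_edgeFinset, SimpleGraph.mem_edgeSet]
          exact pathGraph_adj.mpr (Or.inl (by simp)))
        (by
          intro k1 _ k2 _ h
          rw [Sym2.eq_iff] at h
          rcases h with ⟨h1, h2⟩ | ⟨h1, h2⟩
          · exact Fin.castSucc_injective _ h1
          · have e1 := congrArg Fin.val h1
            have e2 := congrArg Fin.val h2
            simp at e1 e2
            omega)
      simpa using this
    have hsub : (pathGraph (m + 1)).edgeFinset ⊆ T.edgeFinset :=
      SimpleGraph.edgeFinset_mono hle
    have heq : (pathGraph (m + 1)).edgeFinset = T.edgeFinset :=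
      Finset.eq_of_subset_of_card_le hsub (by omega)
    apply SimpleGraph.edgeSet_injective
    rw [← SimpleGraph.coe_edgeFinset, ← SimpleGraph.coe_edgeFinset, heq]
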